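/- Let A ∈ ℝ^{m×m} be symmetric positive definite, let y ∈ ℝ^m be nonzero, and let W ∈ ℝ^{m×r} have orthonormal columns with Wᵀ y = ‖y‖₂ e₁. Set T = Wᵀ A W, x = A⁻¹ y, and x̂ = ‖y‖₂ W T⁻¹ e₁. Then yᵀ A⁻¹ y − ‖y‖₂² (T⁻¹)₁₁ = ‖x − x̂‖_A², where (T⁻¹)₁₁ = e₁ᵀ T⁻¹ e₁. In particular, yᵀ A⁻¹ y − ‖y‖₂² (T⁻¹)₁₁ ≥ 0. -/

import Mathlib

open Matrix

/-- Euclidean norm of a vector in `ℝ^m`. -/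
noncomputable def euclNorm {m : ℕ} (y : Fin m → ℝ) : ℝ :=
  Real.sqrt (y ⬝ᵥ y)

/-- The `A`-norm `‖v‖_A = √(vᵀ A v)`. -/
noncomputable def anorm {m : ℕ} (A : Matrix (Fin m) (Fin m) ℝ) (v : Fin m → ℝ) : ℝ :=
  Real.sqrt (v ⬝ᵥ A *ᵥ v)

/-- The range (column span) of a matrix `W ∈ ℝ^{m×r}`. -/
def colSpan {m r : ℕ} (W : Matrix (Fin m) (Fin r) ℝ) : Submodule ℝ (Fin m → ℝ) :=
  Submodule.span ℝ (Set.range Wᵀ)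

/-- The block Krylov subspace `K_k(A, Z)`, the span of the columns of
`Z, AZ, …, A^{k-1} Z`. -/
def krylov {m b : ℕ} (k : ℕ) (A : Matrix (Fin m) (Fin m) ℝ)
    (Z : Matrix (Fin m) (Fin b) ℝ) : Submodule ℝ (Fin m → ℝ) :=
  Submodule.span ℝ (⋃ j ∈ Finset.range k, Set.range (A ^ j * Z)ᵀ)

/-- The Krylov subspace `K_k(A, y)` for a vector `y`, the span of
`y, Ay, …, A^{k-1} y`. -/
def krylovVec {m : ℕ} (k : ℕ) (A : Matrix (Fin m) (Fin m) ℝ)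
    (y : Fin m → ℝ) : Submodule ℝ (Fin m → ℝ) :=
  Submodule.span ℝ {v | ∃ j < k, v = (A ^ j) *ᵥ y}

/-- Condition number: ratio of the largest to the smallest eigenvalue
(for a symmetric positive definite matrix, the spectrum is the set of its eigenvalues). -/
noncomputable def condNum {m : ℕ} (A : Matrix (Fin m) (Fin m) ℝ) : ℝ :=
  sSup (spectrum ℝ A) / sInf (spectrum ℝ A)

/-- `Trace(log M) = log (det M)` for a symmetric positive definite matrix `M`. -/
noncomputable def traceLog {n : ℕ} (M : Matrix (Fin n) (Fin n) ℝ) : ℝ :=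
  Real.log M.det

/-- The eigenvalues of a symmetric matrix, sorted in decreasing order:
`eigDesc M i` is the `i`-th largest eigenvalue of `M` (`i` is 0-based). -/
noncomputable def eigDesc {m : ℕ} (M : Matrix (Fin m) (Fin m) ℝ) : Fin m → ℝ :=
  open scoped Classical in
  if h : M.IsHermitian then fun i => (h.eigenvalues ∘ Tuple.sort h.eigenvalues) i.rev
  else 0


/-- the residual of the quadratic form approximation equals the squared
`A`-norm error of the corresponding Galerkin/CG approximation; in particular it is
nonnegative. -/
theorem stmt1 {m r : ℕ} [NeZero r]
    (A : Matrix (Fin m) (Fin m) ℝ) (hA : A.PosDef)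
    (y : Fin m → ℝ) (hy : y ≠ 0)
    (W : Matrix (Fin m) (Fin r) ℝ) (hW : Wᵀ * W = 1)
    (hWy : Wᵀ *ᵥ y = euclNorm y • (Pi.single (0 : Fin r) (1 : ℝ) : Fin r → ℝ)) :
    y ⬝ᵥ (A⁻¹ *ᵥ y) - euclNorm y ^ 2 * (Wᵀ * A * W)⁻¹ 0 0 =
      anorm A (A⁻¹ *ᵥ y -
        euclNorm y • (W *ᵥ ((Wᵀ * A * W)⁻¹ *ᵥ (Pi.single (0 : Fin r) (1 : ℝ) : Fin r → ℝ)))) ^ 2 ∧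
    0 ≤ y ⬝ᵥ (A⁻¹ *ᵥ y) - euclNorm y ^ 2 * (Wᵀ * A * W)⁻¹ 0 0 := by
  set c := euclNorm y with hc
  set e : Fin r → ℝ := Pi.single (0 : Fin r) (1 : ℝ) with he
  set T : Matrix (Fin r) (Fin r) ℝ := Wᵀ * A * W with hTdef
  have hAs : Aᵀ = A := by
    have := hA.isHermitian
    rwa [Matrix.IsHermitian, conjTranspose_eq_transpose_of_trivial] at this
  have hAdet : IsUnit A.det := isUnit_iff_ne_zero.mpr (ne_of_gt hA.det_pos)
  have hWinj : ∀ z : Fin r → ℝ, W *ᵥ z = 0 → z = 0 := by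
    intro z hz
    have h2 : Wᵀ *ᵥ (W *ᵥ z) = 0 := by rw [hz, mulVec_zero]
    rwa [mulVec_mulVec, hW, one_mulVec] at h2
  have hTpd : T.PosDef := by
    refine posDef_iff_dotProduct_mulVec.mpr ⟨?_, ?_⟩
    · rw [Matrix.IsHermitian, conjTranspose_eq_transpose_of_trivial, hTdef,
        transpose_mul, transpose_mul, transpose_transpose, hAs, Matrix.mul_assoc]
    · intro z hz
      have h1 : W *ᵥ z ≠ 0 := fun h => hz (hWinj z h)
      have h2 := hA.dotProduct_mulVec_pos h1
      simp only [star_trivial] at h2 ⊢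
      rw [hTdef, Matrix.mul_assoc, ← mulVec_mulVec, ← mulVec_mulVec,
        dotProduct_mulVec, vecMul_transpose]
      exact h2
  have hTdet : IsUnit T.det := isUnit_iff_ne_zero.mpr (ne_of_gt hTpd.det_pos)
  set u : Fin r → ℝ := T⁻¹ *ᵥ e with hu
  set x : Fin m → ℝ := A⁻¹ *ᵥ y with hx
  set w : Fin m → ℝ := W *ᵥ u with hw
  have hAy : A *ᵥ x = y := by
    rw [hx, mulVec_mulVec, mul_nonsing_inv _ hAdet, one_mulVec]
  have hu0 : u 0 = T⁻¹ 0 0 := by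
    simp [hu, he, mulVec_single]
  -- w ⬝ᵥ y
  have hwy : w ⬝ᵥ y = c * T⁻¹ 0 0 := by
    rw [hw, dotProduct_comm, dotProduct_mulVec, ← mulVec_transpose, hWy]
    simp [he, smul_dotProduct, single_dotProduct, hu0]
  have h2 : w ⬝ᵥ A *ᵥ x = c * T⁻¹ 0 0 := by rw [hAy, hwy]
  have h3 : x ⬝ᵥ A *ᵥ w = c * T⁻¹ 0 0 := by
    rw [dotProduct_mulVec, ← mulVec_transpose, hAs, hAy, dotProduct_comm, hwy]
  have hTu : T *ᵥ u = e := by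
    rw [hu, mulVec_mulVec, mul_nonsing_inv _ hTdet, one_mulVec]
  have hkey : ∀ z : Fin m → ℝ, (W *ᵥ u) ⬝ᵥ z = u ⬝ᵥ (Wᵀ *ᵥ z) := by
    intro z
    rw [dotProduct_comm, dotProduct_mulVec, ← mulVec_transpose, dotProduct_comm]
  have h4 : w ⬝ᵥ A *ᵥ w = T⁻¹ 0 0 := by
    rw [hw, hkey, mulVec_mulVec, mulVec_mulVec, mulVec_mulVec, ← hTdef,
      mul_nonsing_inv _ hTdet, one_mulVec, he, dotProduct_single, mul_one]
    exact hu0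
  have h1 : x ⬝ᵥ A *ᵥ x = y ⬝ᵥ x := by rw [hAy, dotProduct_comm]
  set v : Fin m → ℝ := x - c • w with hv
  have hquad : v ⬝ᵥ A *ᵥ v = y ⬝ᵥ x - c ^ 2 * T⁻¹ 0 0 := by
    rw [hv, mulVec_sub, mulVec_smul, sub_dotProduct, dotProduct_sub, dotProduct_sub]
    simp only [smul_dotProduct, dotProduct_smul, smul_eq_mul]
    rw [h1, h2, h3, h4]
    ring
  have hnn : 0 ≤ v ⬝ᵥ A *ᵥ v := by
    have := hA.posSemidef.dotProduct_mulVec_nonneg v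
    simpa using this
  have hanorm : anorm A v ^ 2 = v ⬝ᵥ A *ᵥ v := Real.sq_sqrt hnn
  constructor
  · rw [hanorm, hquad]
  · rw [← hquad]
    exact hnn
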